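/- arXiv:2601.07111 — 2 statements merged into one kernel-verified Lean document; each statement's English description precedes it below -/
import Mathlib

section
/- Reduction of twirled deviations to Pauli channels: Let n ≥ 1, let W be a finite type (the working register), and let D be a complex matrix on the tensor product space indexed by (Fin n → Fin 2) × W, written in the Pauli basis of the first factor as D = ∑_{f : Fin n → Fin 4} (P_f ⊗ M_f) for a family of W × W complex matrices M_f. Then for every 2^n × 2^n complex matrix ρ and every W × W complex matrix σ, (1/4^n) ∑_{h : Fin n → Fin 4} ((P_h)ᴴ ⊗ 1) · D · (P_h ⊗ 1) · (ρ ⊗ σ) · ((P_h)ᴴ ⊗ 1) · Dᴴ · (P_h ⊗ 1) = ∑_{f : Fin n → Fin 4} (P_f · ρ · (P_f)ᴴ) ⊗ (M_f · σ · (M_f)ᴴ). In words: sandwiching an arbitrary deviation between a uniformly random Pauli encryption and the matching decryption reduces it to a convex combination of Pauli deviations on the first register. -/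
open Matrix Finset

/-- The four single-qubit Pauli matrices: identity, X, Y, Z. -/
noncomputable def pauli : Fin 4 → Matrix (Fin 2) (Fin 2) ℂ
  | 0 => 1
  | 1 => !![0, 1; 1, 0]
  | 2 => !![0, -Complex.I; Complex.I, 0]
  | 3 => !![1, 0; 0, -1]

/-- The `n`-qubit Pauli string associated to `f : Fin n → Fin 4`. -/
noncomputable def PauliString (n : ℕ) (f : Fin n → Fin 4) :
    Matrix (Fin n → Fin 2) (Fin n → Fin 2) ℂ :=
  fun x y => ∏ i, pauli (f i) (x i) (y i)
open Kronecker

noncomputable def eps' (f h : Fin 4) : ℂ := if f = 0 ∨ h = 0 ∨ f = h then 1 else -1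

lemma pauli_hermitian (k : Fin 4) : (pauli k)ᴴ = pauli k := by
  fin_cases k <;> ext i j <;> fin_cases i <;> fin_cases j <;>
    simp [pauli, Matrix.conjTranspose_apply]

lemma pauli_sandwich (f h : Fin 4) :
    pauli h * pauli f * pauli h = eps' f h • pauli f := by
  fin_cases f <;> fin_cases h <;> ext i j <;> fin_cases i <;> fin_cases j <;>
    simp [pauli, eps', Matrix.mul_apply, Fin.sum_univ_two, Complex.I_mul_I]

lemma eps'_orth (a b : Fin 4) : ∑ k : Fin 4, eps' a k * eps' b k = if a = b then 4 else 0 := by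
  fin_cases a <;> fin_cases b <;>
    simp [eps', Fin.sum_univ_four] <;> norm_num

lemma pauli_star_entry (k : Fin 4) (a b : Fin 2) :
    star (pauli k a b) = pauli k b a := by
  have := congrFun (congrFun (pauli_hermitian k) b) a
  simpa [Matrix.conjTranspose_apply] using this

lemma pauliString_of (n : ℕ) (f : Fin n → Fin 4) :
    PauliString n f = Matrix.of fun x y => ∏ i, pauli (f i) (x i) (y i) := rfl

lemma pauliString_hermitian (n : ℕ) (f : Fin n → Fin 4) :
    (PauliString n f)ᴴ = PauliString n f := by
  ext x y
  show star (∏ i, pauli (f i) (y i) (x i)) = ∏ i, pauli (f i) (x i) (y i)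
  rw [star_prod]
  simp only [pauli_star_entry]

lemma piProd_mul (n : ℕ) (A B : Fin n → Matrix (Fin 2) (Fin 2) ℂ) :
    (Matrix.of fun x y : Fin n → Fin 2 => ∏ i, A i (x i) (y i)) *
      (Matrix.of fun x y => ∏ i, B i (x i) (y i)) =
    Matrix.of fun x y => ∏ i, (A i * B i) (x i) (y i) := by
  ext x y
  rw [Matrix.mul_apply]
  simp only [Matrix.of_apply, Matrix.mul_apply, ← Finset.prod_mul_distrib]
  have := Finset.prod_univ_sum (fun _ : Fin n => (Finset.univ : Finset (Fin 2)))
    (fun i k => A i (x i) k * B i k (y i))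
  rw [Fintype.piFinset_univ] at this
  rw [← this]

lemma pauliString_sandwich (n : ℕ) (f h : Fin n → Fin 4) :
    PauliString n h * PauliString n f * PauliString n h
      = (∏ i, eps' (f i) (h i)) • PauliString n f := by
  rw [pauliString_of n h, pauliString_of n f, piProd_mul, piProd_mul]
  ext x y
  simp only [Matrix.of_apply, pauli_sandwich, Matrix.smul_apply, smul_eq_mul,
    Finset.prod_mul_distrib]

lemma kron_conjTranspose {m n p q : Type*} [Fintype m] [Fintype n]
    (A : Matrix m n ℂ) (B : Matrix p q ℂ) : (A ⊗ₖ B)ᴴ = Aᴴ ⊗ₖ Bᴴ := by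
  ext ⟨a, b⟩ ⟨c, d⟩
  simp [Matrix.conjTranspose_apply, Matrix.kroneckerMap_apply, mul_comm]

lemma eps'_prod_orth (n : ℕ) (f g : Fin n → Fin 4) :
    ∑ h : Fin n → Fin 4, (∏ i, eps' (f i) (h i)) * ∏ i, eps' (g i) (h i)
      = if f = g then (4 : ℂ) ^ n else 0 := by
  have step : ∀ h : Fin n → Fin 4,
      (∏ i, eps' (f i) (h i)) * ∏ i, eps' (g i) (h i)
        = ∏ i, (eps' (f i) (h i) * eps' (g i) (h i)) := fun h =>
    (Finset.prod_mul_distrib).symm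
  simp only [step]
  have := Finset.prod_univ_sum (fun _ : Fin n => (Finset.univ : Finset (Fin 4)))
    (fun i k => eps' (f i) k * eps' (g i) k)
  rw [Fintype.piFinset_univ] at this
  rw [← this]
  simp only [eps'_orth]
  by_cases hfg : f = g
  · subst hfg
    simp
  · rw [if_neg hfg]
    obtain ⟨i, hi⟩ := Function.ne_iff.mp hfg
    exact Finset.prod_eq_zero (Finset.mem_univ i) (by simp [hi])

/-- **Reduction of twirled deviations to Pauli channels**: sandwiching an arbitrary
deviation `D = ∑_f P_f ⊗ M_f` between a uniformly random Pauli encryption of the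
first register and the matching decryption reduces it to a convex combination of
Pauli deviations on the first register. -/
theorem twirled_deviation_reduction (n : ℕ) (hn : 1 ≤ n)
    (W : Type) [Fintype W] [DecidableEq W]
    (D : Matrix ((Fin n → Fin 2) × W) ((Fin n → Fin 2) × W) ℂ)
    (M : (Fin n → Fin 4) → Matrix W W ℂ)
    (hD : D = ∑ f : Fin n → Fin 4, PauliString n f ⊗ₖ M f)
    (ρ : Matrix (Fin n → Fin 2) (Fin n → Fin 2) ℂ) (σ : Matrix W W ℂ) :
    ((4 : ℂ) ^ n)⁻¹ • ∑ h : Fin n → Fin 4,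
        ((PauliString n h)ᴴ ⊗ₖ (1 : Matrix W W ℂ)) * D *
          (PauliString n h ⊗ₖ (1 : Matrix W W ℂ)) * (ρ ⊗ₖ σ) *
          ((PauliString n h)ᴴ ⊗ₖ (1 : Matrix W W ℂ)) * Dᴴ *
          (PauliString n h ⊗ₖ (1 : Matrix W W ℂ))
      = ∑ f : Fin n → Fin 4,
          (PauliString n f * ρ * (PauliString n f)ᴴ) ⊗ₖ (M f * σ * (M f)ᴴ) := by
  set Q := PauliString n with hQ
  have hherm : ∀ f, (Q f)ᴴ = Q f := pauliString_hermitian n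
  set c : (Fin n → Fin 4) → (Fin n → Fin 4) → ℂ := fun f h => ∏ i, eps' (f i) (h i) with hc
  have hsand : ∀ f h, Q h * Q f * Q h = c f h • Q f := fun f h => pauliString_sandwich n f h
  have hDH : Dᴴ = ∑ g : Fin n → Fin 4, Q g ⊗ₖ (M g)ᴴ := by
    rw [hD, Matrix.conjTranspose_sum]
    exact Finset.sum_congr rfl fun g _ => by rw [kron_conjTranspose, hherm]
  have key : ∀ h : Fin n → Fin 4,
      ((Q h)ᴴ ⊗ₖ (1 : Matrix W W ℂ)) * D * (Q h ⊗ₖ (1 : Matrix W W ℂ)) * (ρ ⊗ₖ σ) *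
        ((Q h)ᴴ ⊗ₖ (1 : Matrix W W ℂ)) * Dᴴ * (Q h ⊗ₖ (1 : Matrix W W ℂ))
      = ∑ f : Fin n → Fin 4, ∑ g : Fin n → Fin 4,
          (c f h * c g h) • ((Q f * ρ * Q g) ⊗ₖ (M f * σ * (M g)ᴴ)) := by
    intro h
    rw [hDH, hD]
    simp only [hherm]
    simp only [Finset.mul_sum, Finset.sum_mul]
    rw [Finset.sum_comm]
    refine Finset.sum_congr rfl fun f _ => Finset.sum_congr rfl fun g _ => ?_
    simp only [← Matrix.mul_kronecker_mul, Matrix.one_mul, Matrix.mul_one]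
    rw [← Matrix.smul_kronecker]
    have assoc : Q h * Q f * Q h * ρ * Q h * Q g * Q h
        = (Q h * Q f * Q h) * ρ * (Q h * Q g * Q h) := by
      simp only [mul_assoc]
    have key2 : Q h * Q f * Q h * ρ * Q h * Q g * Q h = (c f h * c g h) • (Q f * ρ * Q g) := by
      rw [assoc, hsand, hsand, Matrix.smul_mul, Matrix.smul_mul, Matrix.mul_smul, smul_smul,
        mul_comm]
    rw [key2]
  rw [Finset.sum_congr rfl fun h _ => key h]
  rw [Finset.sum_comm]
  have diag : ∀ f : Fin n → Fin 4,
      (∑ h : Fin n → Fin 4, ∑ g : Fin n → Fin 4,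
        (c f h * c g h) • ((Q f * ρ * Q g) ⊗ₖ (M f * σ * (M g)ᴴ)))
      = ((4 : ℂ) ^ n) • ((Q f * ρ * Q f) ⊗ₖ (M f * σ * (M f)ᴴ)) := by
    intro f
    rw [Finset.sum_comm]
    have inner : ∀ g : Fin n → Fin 4,
        (∑ h : Fin n → Fin 4, (c f h * c g h) • ((Q f * ρ * Q g) ⊗ₖ (M f * σ * (M g)ᴴ)))
        = (if f = g then (4 : ℂ) ^ n else 0) • ((Q f * ρ * Q g) ⊗ₖ (M f * σ * (M g)ᴴ)) := by
      intro g
      rw [← Finset.sum_smul, eps'_prod_orth]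
    rw [Finset.sum_congr rfl fun g _ => inner g]
    simp only [ite_smul, zero_smul, Finset.sum_ite_eq, Finset.mem_univ, if_true]
  rw [Finset.sum_congr rfl fun f _ => diag f]
  rw [Finset.smul_sum]
  have h4 : ((4 : ℂ) ^ n) ≠ 0 := pow_ne_zero n (by norm_num)
  simp only [smul_smul, inv_mul_cancel₀ h4, one_smul]
  exact Finset.sum_congr rfl fun f _ => by rw [hherm]
end

section
/- Test-round detection bound (ε part of the negligible security error lemma): Let N, s, m, k, w be natural numbers with s ≤ N, m ≤ N, k ≥ 1. Let T be distributed according to the hypergeometric distribution with population N, m marked items, and s draws (the number of attacked test rounds under a uniformly random partition), and conditionally on T = t let Y be binomial with t trials and success probability 1/k (each attacked test round is detected independently with probability at least 1/k, since among k trap types at least one detects the deviation). Then for every real χ with 0 ≤ χ, (m/N) − χ ≥ 0, and w/s ≤ ((m/N) − χ)/k, the probability that Y < w satisfies Pr[Y < w] ≤ exp(−2·χ²·s) + exp(−2·(((m/N) − χ)/k − w/s)² · s / ((m/N) − χ)). -/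
open Finset

/-- The hypergeometric mass function: population `N`, `K` marked items, `n` draws. -/
noncomputable def hypergeomPMF (N K n j : ℕ) : ℝ :=
  ((K.choose j : ℝ) * ((N - K).choose (n - j) : ℝ)) / (N.choose n : ℝ)

/-- The binomial mass function with `t` trials and success probability `p`. -/
noncomputable def binomPMF (t : ℕ) (p : ℝ) (j : ℕ) : ℝ :=
  (t.choose j : ℝ) * p ^ j * (1 - p) ^ (t - j)

lemma desc_ineq {K N : ℕ} (h : K ≤ N) (j : ℕ) :
    K.descFactorial j * N ^ j ≤ N.descFactorial j * K ^ j := by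
  induction j with
  | zero => simp
  | succ j ih =>
    rw [Nat.descFactorial_succ, Nat.descFactorial_succ, pow_succ, pow_succ]
    have key : (K - j) * N ≤ (N - j) * K := by
      rcases le_or_gt j K with hj | hj
      · rw [Nat.sub_mul, Nat.sub_mul, Nat.mul_comm K N, Nat.mul_comm N K]
        exact Nat.sub_le_sub_left (Nat.mul_le_mul_left j h) _
      · simp [Nat.sub_eq_zero_of_le hj.le]
    calc (K - j) * K.descFactorial j * (N ^ j * N)
        = ((K - j) * N) * (K.descFactorial j * N ^ j) := by ring
      _ ≤ ((N - j) * K) * (N.descFactorial j * K ^ j) :=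
          Nat.mul_le_mul key ih
      _ = (N - j) * N.descFactorial j * (K ^ j * K) := by ring

lemma choose_pow_ineq {K N : ℕ} (h : K ≤ N) (j : ℕ) :
    K.choose j * N ^ j ≤ N.choose j * K ^ j := by
  have h1 := desc_ineq h j
  rw [Nat.descFactorial_eq_factorial_mul_choose, Nat.descFactorial_eq_factorial_mul_choose] at h1
  have := Nat.factorial_pos j
  calc K.choose j * N ^ j = (j.factorial * (K.choose j * N ^ j)) / j.factorial := by
        rw [Nat.mul_div_cancel_left _ this]
    _ ≤ (j.factorial * (N.choose j * K ^ j)) / j.factorial := by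
        apply Nat.div_le_div_right
        calc j.factorial * (K.choose j * N ^ j) = j.factorial * K.choose j * N ^ j := by ring
          _ ≤ j.factorial * N.choose j * K ^ j := h1
          _ = j.factorial * (N.choose j * K ^ j) := by ring
    _ = N.choose j * K ^ j := Nat.mul_div_cancel_left _ this

lemma vandermonde_range (a b n : ℕ) :
    ∑ r ∈ range (n + 1), a.choose r * b.choose (n - r) = (a + b).choose n := by
  rw [Nat.add_choose_eq]
  rw [Finset.Nat.sum_antidiagonal_eq_sum_range_succ_mk]

lemma choose_mul' {K j r : ℕ} (hj : j ≤ K ∨ True) :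
    K.choose (j + r) * (j + r).choose j = K.choose j * (K - j).choose r := by
  rcases le_or_gt (j + r) K with h | h
  · have := Nat.choose_mul (n := K) (Nat.le_add_right j r)
    simpa using this
  · rw [Nat.choose_eq_zero_of_lt h]
    rcases le_or_gt j K with hjK | hjK
    · rw [Nat.choose_eq_zero_of_lt (by omega : K - j < r)]
      ring
    · rw [Nat.choose_eq_zero_of_lt hjK]
      ring

lemma key_sum {N K s : ℕ} (hK : K ≤ N) {j : ℕ} (hj : j ≤ s) :
    ∑ t ∈ range (s + 1), K.choose t * (N - K).choose (s - t) * t.choose j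
      = K.choose j * (N - j).choose (s - j) := by
  rcases le_or_gt j K with hjK | hjK
  · have step1 : ∑ t ∈ range (s + 1), K.choose t * (N - K).choose (s - t) * t.choose j
        = ∑ t ∈ Ico j (s + 1), K.choose t * (N - K).choose (s - t) * t.choose j := by
      symm
      apply Finset.sum_subset
      · intro t ht; simp at ht ⊢; omega
      · intro t ht ht2
        simp only [mem_Ico, mem_range] at ht ht2
        have : t < j := by omega
        rw [Nat.choose_eq_zero_of_lt this, Nat.mul_zero]
    rw [step1, Finset.sum_Ico_eq_sum_range]
    have hrw : s + 1 - j = (s - j) + 1 := by omega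
    rw [hrw]
    have : ∀ r ∈ range ((s - j) + 1),
        K.choose (j + r) * (N - K).choose (s - (j + r)) * (j + r).choose j
        = K.choose j * ((K - j).choose r * (N - K).choose ((s - j) - r)) := by
      intro r hr
      have h1 : K.choose (j + r) * (j + r).choose j = K.choose j * (K - j).choose r :=
        choose_mul' (Or.inr trivial)
      have h2 : s - (j + r) = (s - j) - r := by omega
      rw [h2]; nlinarith [h1]
    rw [Finset.sum_congr rfl this, ← Finset.mul_sum, vandermonde_range]
    have : K - j + (N - K) = N - j := by omega
    rw [this]
  · rw [Nat.choose_eq_zero_of_lt hjK, Nat.zero_mul]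
    apply Finset.sum_eq_zero
    intro t ht
    rcases le_or_gt t K with h | h
    · rw [Nat.choose_eq_zero_of_lt (by omega : t < j), Nat.mul_zero]
    · rw [Nat.choose_eq_zero_of_lt h, Nat.zero_mul, Nat.zero_mul]

lemma chvatal {N K s : ℕ} (hK : K ≤ N) (hN : 0 < N) (hs : s ≤ N) {x : ℝ} (hx : 1 ≤ x) :
    ∑ t ∈ range (s + 1), (K.choose t : ℝ) * ((N - K).choose (s - t) : ℝ) * x ^ t
      ≤ (N.choose s : ℝ) * (1 + (x - 1) * K / N) ^ s := by
  have hy : 0 ≤ x - 1 := by linarith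
  -- expand x^t
  have hxpow : ∀ t ∈ range (s + 1),
      (K.choose t : ℝ) * ((N - K).choose (s - t) : ℝ) * x ^ t
      = ∑ j ∈ range (s + 1),
          (K.choose t : ℝ) * ((N - K).choose (s - t) : ℝ) * ((t.choose j : ℝ) * (x - 1) ^ j) := by
    intro t ht
    simp only [mem_range] at ht
    have : x ^ t = ∑ j ∈ range (s + 1), (t.choose j : ℝ) * (x - 1) ^ j := by
      have h1 : x ^ t = ((x - 1) + 1) ^ t := by ring_nf
      rw [h1, add_pow]
      simp only [one_pow, mul_one]
      rw [Finset.sum_subset (Finset.range_subset_range.mpr (by omega : t + 1 ≤ s + 1))]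
      · apply Finset.sum_congr rfl; intro j _; ring
      · intro j hj hj2
        simp only [mem_range] at hj hj2
        rw [Nat.choose_eq_zero_of_lt (by omega), Nat.cast_zero]
        ring
    rw [this, Finset.mul_sum]
  rw [Finset.sum_congr rfl hxpow, Finset.sum_comm]
  have hcol : ∀ j ∈ range (s + 1),
      ∑ t ∈ range (s + 1),
          (K.choose t : ℝ) * ((N - K).choose (s - t) : ℝ) * ((t.choose j : ℝ) * (x - 1) ^ j)
      = ((K.choose j : ℝ) * ((N - j).choose (s - j) : ℝ)) * (x - 1) ^ j := by
    intro j hj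
    simp only [mem_range] at hj
    have := key_sum hK (j := j) (by omega : j ≤ s)
    calc ∑ t ∈ range (s + 1),
          (K.choose t : ℝ) * ((N - K).choose (s - t) : ℝ) * ((t.choose j : ℝ) * (x - 1) ^ j)
        = (↑(∑ t ∈ range (s + 1), K.choose t * (N - K).choose (s - t) * t.choose j) : ℝ)
            * (x - 1) ^ j := by
          push_cast
          rw [Finset.sum_mul]
          apply Finset.sum_congr rfl; intro t _; ring
      _ = _ := by rw [this]; push_cast; ring
  rw [Finset.sum_congr rfl hcol]
  -- RHS expansion
  have hrhs : (1 + (x - 1) * K / N) ^ s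
      = ∑ j ∈ range (s + 1), ((x - 1) * K / N) ^ j * (s.choose j : ℝ) := by
    rw [add_comm (1 : ℝ), add_pow]
    simp only [one_pow, mul_one]
  rw [hrhs, Finset.mul_sum]
  apply Finset.sum_le_sum
  intro j hj
  simp only [mem_range] at hj
  have hjs : j ≤ s := by omega
  -- need: C(K,j)*C(N-j,s-j)*(x-1)^j ≤ C(N,s) * ((x-1)*K/N)^j * C(s,j)
  have hNj : (0:ℝ) < (N:ℝ) ^ j := by positivity
  have hkey : (K.choose j : ℝ) * ((N - j).choose (s - j) : ℝ)
      ≤ (N.choose s : ℝ) * (s.choose j : ℝ) * ((K:ℝ) / N) ^ j := by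
    have hid : N.choose s * s.choose j = N.choose j * (N - j).choose (s - j) :=
      Nat.choose_mul hjs
    have h1 : (K.choose j : ℝ) * (N:ℝ) ^ j ≤ (N.choose j : ℝ) * (K:ℝ) ^ j := by
      exact_mod_cast choose_pow_ineq hK j
    have h2 : (K.choose j : ℝ) * ((N - j).choose (s - j) : ℝ) * (N:ℝ) ^ j
        ≤ (N.choose j : ℝ) * ((N - j).choose (s - j) : ℝ) * (K:ℝ) ^ j := by
      have hc : (0:ℝ) ≤ ((N - j).choose (s - j) : ℝ) := by positivity
      nlinarith [h1]
    have hid' : (N.choose s : ℝ) * (s.choose j : ℝ)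
        = (N.choose j : ℝ) * ((N - j).choose (s - j) : ℝ) := by exact_mod_cast hid
    rw [div_pow, hid', mul_div_assoc', le_div_iff₀ hNj]
    nlinarith [h2]
  calc (K.choose j : ℝ) * ((N - j).choose (s - j) : ℝ) * (x - 1) ^ j
      ≤ ((N.choose s : ℝ) * (s.choose j : ℝ) * ((K:ℝ) / N) ^ j) * (x - 1) ^ j := by
        apply mul_le_mul_of_nonneg_right hkey (by positivity)
    _ = (N.choose s : ℝ) * (((x - 1) * K / N) ^ j * (s.choose j : ℝ)) := by
        rw [mul_div_assoc, mul_pow]; ring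

lemma bern_hoeffding {p : ℝ} (hp0 : 0 ≤ p) (hp1 : p ≤ 1) {l : ℝ} (hl : 0 ≤ l) :
    1 - p + p * Real.exp l ≤ Real.exp (p * l + l ^ 2 / 8) := by
  set g : ℝ → ℝ := fun t => 1 - p + p * Real.exp t with hg
  have hgpos : ∀ t, 0 < g t := by
    intro t
    rcases lt_or_eq_of_le hp1 with h | h
    · have : 0 ≤ p * Real.exp t := mul_nonneg hp0 (Real.exp_pos t).le
      simp only [hg]; linarith
    · simp only [hg]; rw [h]; simpa using Real.exp_pos t
  set f : ℝ → ℝ := fun t => p * t + t ^ 2 / 8 - Real.log (g t) with hf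
  set h : ℝ → ℝ := fun t => p + t / 4 - p * Real.exp t / g t with hh
  have Hg : ∀ t, HasDerivAt g (p * Real.exp t) t := fun t =>
    ((Real.hasDerivAt_exp t).const_mul p).const_add (1 - p)
  have Hf : ∀ t, HasDerivAt f (h t) t := by
    intro t
    have h1 : HasDerivAt (fun t : ℝ => p * t) p t := by
      simpa using (hasDerivAt_id t).const_mul p
    have h2 : HasDerivAt (fun t : ℝ => t ^ 2 / 8) (t / 4) t := by
      have := (hasDerivAt_pow 2 t).div_const 8
      refine this.congr_deriv ?_
      simp; ring
    have h4 : HasDerivAt (fun t => Real.log (g t)) (p * Real.exp t / g t) t :=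
      (Hg t).log (hgpos t).ne'
    exact (h1.add h2).sub h4
  have Hh : ∀ t, HasDerivAt h (1 / 4 - p * Real.exp t * (1 - p) / (g t) ^ 2) t := by
    intro t
    have h2 : HasDerivAt (fun t : ℝ => p + t / 4) (1 / 4) t := by
      simpa using ((hasDerivAt_id t).div_const 4).const_add p
    have hu : HasDerivAt (fun t => p * Real.exp t) (p * Real.exp t) t :=
      (Real.hasDerivAt_exp t).const_mul p
    have h5 : HasDerivAt (fun t => p * Real.exp t / g t)
        ((p * Real.exp t * g t - p * Real.exp t * (p * Real.exp t)) / (g t) ^ 2) t :=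
      hu.div (Hg t) (hgpos t).ne'
    have : (p * Real.exp t * g t - p * Real.exp t * (p * Real.exp t)) / (g t) ^ 2
        = p * Real.exp t * (1 - p) / (g t) ^ 2 := by
      simp only [hg]; ring
    rw [this] at h5
    exact h2.sub h5
  have hderiv_h_nonneg : ∀ t, 0 ≤ 1 / 4 - p * Real.exp t * (1 - p) / (g t) ^ 2 := by
    intro t
    rw [sub_nonneg, div_le_iff₀ (pow_pos (hgpos t) 2)]
    have he := (Real.exp_pos t).le
    simp only [hg]
    nlinarith [sq_nonneg (1 - p - p * Real.exp t), mul_nonneg hp0 he]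
  have mono_h : MonotoneOn h (Set.Ici (0:ℝ)) := by
    apply monotoneOn_of_deriv_nonneg (convex_Ici 0)
    · exact fun x _ => (Hh x).continuousAt.continuousWithinAt
    · exact fun x _ => (Hh x).differentiableAt.differentiableWithinAt
    · intro x _
      rw [(Hh x).deriv]
      exact hderiv_h_nonneg x
  have h0 : h 0 = 0 := by
    simp only [hh, hg]
    norm_num
  have hnonneg : ∀ t ∈ Set.Ici (0:ℝ), 0 ≤ h t := by
    intro t ht
    have := mono_h (Set.self_mem_Ici) ht ht
    rw [h0] at this
    exact this
  have mono_f : MonotoneOn f (Set.Ici (0:ℝ)) := by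
    apply monotoneOn_of_deriv_nonneg (convex_Ici 0)
    · exact fun x _ => (Hf x).continuousAt.continuousWithinAt
    · exact fun x _ => (Hf x).differentiableAt.differentiableWithinAt
    · intro x hx
      rw [interior_Ici] at hx
      rw [(Hf x).deriv]
      exact hnonneg x (le_of_lt (Set.mem_Ioi.mp hx))
  have f0 : f 0 = 0 := by
    simp only [hf, hg]
    norm_num
  have hfl : 0 ≤ f l := by
    have := mono_f (Set.self_mem_Ici) (Set.mem_Ici.mpr hl) hl
    rw [f0] at this
    exact this
  have hlog : Real.log (g l) ≤ p * l + l ^ 2 / 8 := by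
    simp only [hf] at hfl
    linarith
  have := (Real.log_le_iff_le_exp (hgpos l)).mp hlog
  simpa [hg] using this

lemma binomPMF_nonneg {t : ℕ} {p : ℝ} (hp0 : 0 ≤ p) (hp1 : p ≤ 1) (j : ℕ) :
    0 ≤ binomPMF t p j := by
  unfold binomPMF
  have : (0:ℝ) ≤ 1 - p := by linarith
  positivity

lemma binom_mgf (t : ℕ) (p x : ℝ) :
    ∑ y ∈ range (t + 1), binomPMF t p y * x ^ y = (p * x + (1 - p)) ^ t := by
  rw [add_pow]
  apply Finset.sum_congr rfl
  intro y hy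
  unfold binomPMF
  rw [mul_pow]
  ring

lemma binom_sum_one (t : ℕ) (p : ℝ) :
    ∑ y ∈ range (t + 1), binomPMF t p y = 1 := by
  have := binom_mgf t p 1
  simp only [one_pow, mul_one] at this
  rw [this]
  norm_num

lemma binom_tail {t w : ℕ} {p : ℝ} (hp0 : 0 ≤ p) (hp1 : p ≤ 1) (ht : 0 < t)
    (hw : (w : ℝ) ≤ p * t) :
    ∑ y ∈ range (t + 1), (if y < w then binomPMF t p y else 0)
      ≤ Real.exp (-2 * (p * t - w) ^ 2 / t) := by
  have ht' : (0:ℝ) < t := by exact_mod_cast ht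
  set D : ℝ := p * t - w with hD
  have hD0 : 0 ≤ D := by simp only [hD]; linarith
  set l : ℝ := 4 * D / t with hl
  have hl0 : 0 ≤ l := by positivity
  have step3 : p * Real.exp (-l) + (1 - p) ≤ Real.exp (-(p * l) + l ^ 2 / 8) := by
    have hb := bern_hoeffding (by linarith : (0:ℝ) ≤ 1 - p) (by linarith : (1:ℝ) - p ≤ 1) hl0
    have h1 : p * Real.exp (-l) + (1 - p)
        = Real.exp (-l) * (1 - (1 - p) + (1 - p) * Real.exp l) := by
      rw [mul_add, ← mul_assoc, mul_comm (Real.exp (-l)) (1-p), mul_assoc,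
        ← Real.exp_add]
      simp
      ring
    rw [h1]
    calc Real.exp (-l) * (1 - (1 - p) + (1 - p) * Real.exp l)
        ≤ Real.exp (-l) * Real.exp ((1 - p) * l + l ^ 2 / 8) :=
          mul_le_mul_of_nonneg_left hb (Real.exp_pos _).le
      _ = Real.exp (-(p * l) + l ^ 2 / 8) := by rw [← Real.exp_add]; congr 1; ring
  have hbase0 : 0 ≤ p * Real.exp (-l) + (1 - p) := by
    have := (Real.exp_pos (-l)).le
    nlinarith
  calc ∑ y ∈ range (t + 1), (if y < w then binomPMF t p y else 0)
      ≤ ∑ y ∈ range (t + 1), binomPMF t p y * Real.exp (l * ((w:ℝ) - y)) := by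
        apply Finset.sum_le_sum
        intro y _
        have hpmf := binomPMF_nonneg hp0 hp1 (t := t) y
        split_ifs with h
        · have : (1:ℝ) ≤ Real.exp (l * ((w:ℝ) - y)) := by
            rw [Real.one_le_exp_iff]
            have : (y:ℝ) < w := by exact_mod_cast h
            nlinarith
          nlinarith
        · positivity
    _ = Real.exp (l * w) * ∑ y ∈ range (t + 1), binomPMF t p y * (Real.exp (-l)) ^ y := by
        rw [Finset.mul_sum]
        apply Finset.sum_congr rfl
        intro y _
        rw [← Real.exp_nat_mul]
        rw [mul_comm (Real.exp (l * ↑w)), mul_assoc, ← Real.exp_add]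
        congr 2
        ring
    _ = Real.exp (l * w) * (p * Real.exp (-l) + (1 - p)) ^ t := by rw [binom_mgf]
    _ ≤ Real.exp (l * w) * (Real.exp (-(p * l) + l ^ 2 / 8)) ^ t := by
        apply mul_le_mul_of_nonneg_left _ (Real.exp_pos _).le
        exact pow_le_pow_left₀ hbase0 step3 t
    _ = Real.exp (l * w + t * (-(p * l) + l ^ 2 / 8)) := by
        rw [← Real.exp_nat_mul, ← Real.exp_add]
    _ = Real.exp (-2 * (p * t - w) ^ 2 / t) := by
        congr 1
        rw [hl, hD]
        field_simp
        ring

lemma hypergeomPMF_nonneg (N K n j : ℕ) : 0 ≤ hypergeomPMF N K n j := by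
  unfold hypergeomPMF; positivity

lemma hyper_sum {N m s : ℕ} (hm : m ≤ N) (hs : s ≤ N) :
    ∑ t ∈ range (s + 1), hypergeomPMF N m s t = 1 := by
  unfold hypergeomPMF
  rw [← Finset.sum_div]
  have h1 : ∑ t ∈ range (s + 1), (m.choose t : ℝ) * ((N - m).choose (s - t) : ℝ)
      = ((N.choose s : ℕ) : ℝ) := by
    have := vandermonde_range m (N - m) s
    rw [Nat.add_sub_cancel' hm] at this
    rw [← this]
    push_cast
    rfl
  rw [h1, div_self]
  exact_mod_cast (Nat.choose_pos hs).ne'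

lemma hyper_tail {N m s : ℕ} (hm : m ≤ N) (hs : s ≤ N) (hN : 0 < N) {χ : ℝ}
    (hχ : 0 ≤ χ) (hμ : 0 ≤ (m : ℝ) / N - χ) :
    ∑ t ∈ range (s + 1),
        (if (t : ℝ) < ((m : ℝ) / N - χ) * s then hypergeomPMF N m s t else 0)
      ≤ Real.exp (-2 * χ ^ 2 * s) := by
  have hN' : (0:ℝ) < N := by exact_mod_cast hN
  set μ : ℝ := (m : ℝ) / N - χ with hμdef
  set l : ℝ := 4 * χ with hl
  have hl0 : 0 ≤ l := by positivity
  have hx1 : 1 ≤ Real.exp l := Real.one_le_exp hl0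
  set q : ℝ := ((N - m : ℕ) : ℝ) / N with hq
  have hqm : q = 1 - (m : ℝ) / N := by
    rw [hq, Nat.cast_sub hm]
    field_simp
  have hq0 : 0 ≤ q := by positivity
  have hq1 : q ≤ 1 := by
    rw [hqm]
    have : 0 ≤ (m:ℝ)/N := by positivity
    linarith
  have hCpos : (0:ℝ) < (N.choose s : ℝ) := by exact_mod_cast Nat.choose_pos hs
  -- step 1: pointwise Chernoff factor
  have step1 : ∑ t ∈ range (s + 1),
        (if (t : ℝ) < μ * s then hypergeomPMF N m s t else 0)
      ≤ ∑ t ∈ range (s + 1), hypergeomPMF N m s t * Real.exp (l * (μ * s - t)) := by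
    apply Finset.sum_le_sum
    intro t _
    have hpmf := hypergeomPMF_nonneg N m s t
    split_ifs with h
    · have : (1:ℝ) ≤ Real.exp (l * (μ * s - t)) := by
        rw [Real.one_le_exp_iff]
        nlinarith
      nlinarith
    · positivity
  set G : ℕ → ℝ := fun t =>
    ((N - m).choose t : ℝ) * ((N - (N - m)).choose (s - t) : ℝ) * (Real.exp l) ^ t with hG
  have hrefl : ∑ t ∈ range (s + 1), G (s - t) = ∑ t ∈ range (s + 1), G t := by
    have := Finset.sum_range_reflect G (s + 1)
    simpa using this
  have hterm : ∀ t ∈ range (s + 1),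
      hypergeomPMF N m s t * Real.exp (l * (μ * s - t))
      = Real.exp (l * μ * s - l * s) * (G (s - t) / (N.choose s : ℝ)) := by
    intro t ht
    simp only [mem_range] at ht
    have ht' : t ≤ s := by omega
    have e1 : N - (N - m) = m := by omega
    have e2 : s - (s - t) = t := by omega
    have e3 : ((s - t : ℕ) : ℝ) = (s : ℝ) - t := by
      rw [Nat.cast_sub ht']
    simp only [hG, e1, e2]
    unfold hypergeomPMF
    rw [← Real.exp_nat_mul, e3]
    have hexp : Real.exp (l * (μ * ↑s - ↑t))
        = Real.exp ((↑s - ↑t) * l) * Real.exp (l * μ * ↑s - l * ↑s) := by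
      rw [← Real.exp_add]; congr 1; ring
    rw [hexp]
    ring
  have step2 : ∑ t ∈ range (s + 1), hypergeomPMF N m s t * Real.exp (l * (μ * s - t))
      = Real.exp (l * μ * s - l * s) *
        ((∑ t ∈ range (s + 1), G t) / (N.choose s : ℝ)) := by
    rw [Finset.sum_congr rfl hterm, ← Finset.mul_sum, ← Finset.sum_div, hrefl]
  have hchv : ∑ t ∈ range (s + 1), G t
      ≤ (N.choose s : ℝ) * (1 + (Real.exp l - 1) * ((N - m : ℕ) : ℝ) / N) ^ s := by
    simp only [hG]
    exact chvatal (Nat.sub_le N m) hN hs hx1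
  have hbern : 1 + (Real.exp l - 1) * q ≤ Real.exp (q * l + l ^ 2 / 8) := by
    have := bern_hoeffding hq0 hq1 hl0
    calc 1 + (Real.exp l - 1) * q = 1 - q + q * Real.exp l := by ring
      _ ≤ _ := this
  have hbase0 : (0:ℝ) ≤ 1 + (Real.exp l - 1) * q :=
    by nlinarith
  calc (∑ t ∈ range (s + 1),
        if (t : ℝ) < μ * s then hypergeomPMF N m s t else 0)
      ≤ ∑ t ∈ range (s + 1), hypergeomPMF N m s t * Real.exp (l * (μ * s - t)) := step1
    _ = Real.exp (l * μ * s - l * s) *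
        ((∑ t ∈ range (s + 1), G t) / (N.choose s : ℝ)) := step2
    _ ≤ Real.exp (l * μ * s - l * s) *
        (((N.choose s : ℝ) * (1 + (Real.exp l - 1) * ((N - m : ℕ) : ℝ) / N) ^ s)
          / (N.choose s : ℝ)) := by
        gcongr
    _ = Real.exp (l * μ * s - l * s) * (1 + (Real.exp l - 1) * q) ^ s := by
        rw [mul_comm ((N.choose s : ℝ)), mul_div_assoc, div_self hCpos.ne', mul_one]
        rw [hq, mul_div_assoc]
    _ ≤ Real.exp (l * μ * s - l * s) * (Real.exp (q * l + l ^ 2 / 8)) ^ s := by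
        apply mul_le_mul_of_nonneg_left _ (Real.exp_pos _).le
        exact pow_le_pow_left₀ hbase0 hbern s
    _ = Real.exp (l * μ * s - l * s + s * (q * l + l ^ 2 / 8)) := by
        rw [← Real.exp_nat_mul, ← Real.exp_add]
    _ = Real.exp (-2 * χ ^ 2 * s) := by
        congr 1
        rw [hqm, hμdef, hl]
        ring

set_option maxHeartbeats 1000000 in
/-- **Test-round detection bound** (the ε part of the negligible security error
lemma): let `T ~ Hypergeometric(N, m, s)` be the number of attacked test rounds,
and conditionally on `T = t` let `Y ~ Binomial(t, 1/k)` count the detected ones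
(each attacked test round is detected with probability at least `1/k`). Then for
`χ ≥ 0` with `m/N − χ ≥ 0` and `w/s ≤ ((m/N) − χ)/k`,
`Pr[Y < w] ≤ exp(−2χ²s) + exp(−2(((m/N) − χ)/k − w/s)²·s/((m/N) − χ))`. -/
theorem test_round_detection_bound (N s m k w : ℕ) (hs : s ≤ N) (hm : m ≤ N)
    (hk : 1 ≤ k) (χ : ℝ) (hχ0 : 0 ≤ χ) (hχ1 : 0 ≤ (m : ℝ) / N - χ)
    (hw : (w : ℝ) / s ≤ ((m : ℝ) / N - χ) / k) :
    (∑ t ∈ Finset.range (s + 1), ∑ y ∈ Finset.range (t + 1),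
        if y < w then hypergeomPMF N m s t * binomPMF t (1 / k) y else 0)
      ≤ Real.exp (-2 * χ ^ 2 * s)
        + Real.exp (-2 * (((m : ℝ) / N - χ) / k - (w : ℝ) / s) ^ 2 * s
            / ((m : ℝ) / N - χ)) := by
  have hk' : (1:ℝ) ≤ (k:ℝ) := by exact_mod_cast hk
  have hkpos : (0:ℝ) < k := by linarith
  rcases Nat.eq_zero_or_pos s with hs0 | hs1
  · subst hs0
    simp only [Nat.cast_zero, zero_add, Finset.range_one, Finset.sum_singleton]
    have h1 : hypergeomPMF N m 0 0 = 1 := by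
      simp [hypergeomPMF]
    have h2 : binomPMF 0 (1/(k:ℝ)) 0 = 1 := by
      simp [binomPMF]
    rw [h1, h2]
    simp only [mul_zero, zero_div, Real.exp_zero]
    split_ifs <;> norm_num
  -- main case
  have hs' : (0:ℝ) < s := by exact_mod_cast hs1
  have hN : 0 < N := lt_of_lt_of_le hs1 hs
  set μ : ℝ := (m : ℝ) / N - χ with hμdef
  set E₂ : ℝ := Real.exp (-2 * (μ / k - (w : ℝ) / s) ^ 2 * s / μ) with hE₂
  have hE₂pos : 0 < E₂ := Real.exp_pos _
  have hp0 : (0:ℝ) ≤ 1/(k:ℝ) := by positivity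
  have hp1 : (1:ℝ)/(k:ℝ) ≤ 1 := by
    rw [div_le_one hkpos]; exact hk'
  have hkw : (k:ℝ) * w ≤ μ * s := by
    rw [div_le_div_iff₀ hs' hkpos] at hw
    linarith
  -- pointwise bound
  have hpt : ∀ t ∈ range (s + 1),
      (∑ y ∈ Finset.range (t + 1),
          if y < w then hypergeomPMF N m s t * binomPMF t (1 / k) y else 0)
      ≤ (if (t:ℝ) < μ * s then hypergeomPMF N m s t else 0)
          + hypergeomPMF N m s t * E₂ := by
    intro t ht
    have hhyp := hypergeomPMF_nonneg N m s t
    have hinner : (∑ y ∈ Finset.range (t + 1),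
          if y < w then hypergeomPMF N m s t * binomPMF t (1 / k) y else 0)
        = hypergeomPMF N m s t *
          ∑ y ∈ Finset.range (t + 1), (if y < w then binomPMF t (1 / k) y else 0) := by
      rw [Finset.mul_sum]
      apply Finset.sum_congr rfl
      intro y _
      rw [mul_ite, mul_zero]
    rw [hinner]
    split_ifs with hsmall
    · have hb : ∑ y ∈ Finset.range (t + 1), (if y < w then binomPMF t (1 / k) y else 0)
          ≤ 1 := by
        calc ∑ y ∈ Finset.range (t + 1), (if y < w then binomPMF t (1 / k) y else 0)
            ≤ ∑ y ∈ Finset.range (t + 1), binomPMF t (1 / k) y := by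
              apply Finset.sum_le_sum
              intro y _
              split_ifs
              · exact le_refl _
              · exact binomPMF_nonneg hp0 hp1 y
          _ = 1 := binom_sum_one t (1/(k:ℝ))
      calc hypergeomPMF N m s t *
            ∑ y ∈ Finset.range (t + 1), (if y < w then binomPMF t (1 / k) y else 0)
          ≤ hypergeomPMF N m s t * 1 := mul_le_mul_of_nonneg_left hb hhyp
        _ = hypergeomPMF N m s t := mul_one _
        _ ≤ hypergeomPMF N m s t + hypergeomPMF N m s t * E₂ :=
            le_add_of_nonneg_right (mul_nonneg hhyp hE₂pos.le)
    · rw [zero_add]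
      rcases Nat.eq_zero_or_pos w with hw0 | hw1
      · subst hw0
        simp only [Nat.not_lt_zero, if_false, Finset.sum_const_zero, mul_zero]
        positivity
      · -- w ≥ 1 so μ > 0 and t ≥ 1
        have hw1' : (1:ℝ) ≤ w := by exact_mod_cast hw1
        have hμpos : 0 < μ := by nlinarith
        have htμ : μ * s ≤ (t:ℝ) := le_of_not_gt hsmall
        have htpos : 0 < t := by
          by_contra h
          have : t = 0 := by omega
          subst this
          simp only [Nat.cast_zero] at htμ
          nlinarith
        have ht' : (0:ℝ) < t := by exact_mod_cast htpos
        have hwt : (w:ℝ) ≤ (1/(k:ℝ)) * t := by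
          rw [div_mul_eq_mul_div, le_div_iff₀ hkpos]
          nlinarith
        have htail := binom_tail hp0 hp1 htpos hwt
        have hmono : Real.exp (-2 * ((1/(k:ℝ)) * t - w) ^ 2 / t) ≤ E₂ := by
          rw [hE₂, Real.exp_le_exp]
          have hA : μ / k - (w:ℝ)/s = (μ * s - k * w) / (k * s) := by
            field_simp
          have hB : (1/(k:ℝ)) * t - w = ((t:ℝ) - k * w) / k := by
            field_simp
          have hL : -2 * (μ / k - (w : ℝ) / s) ^ 2 * s / μ
              = -2 * ((μ * s - k * w) ^ 2 / (k^2 * (s * μ))) := by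
            rw [hA, div_pow]
            field_simp
            try ring
          have hR : -2 * ((1/(k:ℝ)) * t - w) ^ 2 / t
              = -2 * (((t:ℝ) - k * w) ^ 2 / (k^2 * t)) := by
            rw [hB, div_pow]
            field_simp
            try ring
          rw [hL, hR]
          have hb0 : (0:ℝ) ≤ k * w := by positivity
          have hab : (k:ℝ) * w ≤ μ * s := hkw
          have hat : μ * s ≤ (t:ℝ) := htμ
          have key : (μ * s - k * w) ^ 2 * t ≤ ((t:ℝ) - k * w) ^ 2 * (μ * s) := by
            nlinarith [mul_nonneg (sub_nonneg.2 hat) (sub_nonneg.2 (show (k*(w:ℝ))^2 ≤ μ*s*t by nlinarith))]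
          have hd1 : (0:ℝ) < k^2 * (s * μ) := by positivity
          have hd2 : (0:ℝ) < k^2 * t := by positivity
          have : (μ * s - k * w) ^ 2 / (k^2 * (s * μ)) ≤ ((t:ℝ) - k * w) ^ 2 / (k^2 * t) := by
            rw [div_le_div_iff₀ hd1 hd2]
            nlinarith [key, sq_nonneg (k:ℝ)]
          linarith
        calc hypergeomPMF N m s t *
              ∑ y ∈ Finset.range (t + 1), (if y < w then binomPMF t (1 / k) y else 0)
            ≤ hypergeomPMF N m s t * Real.exp (-2 * ((1/(k:ℝ)) * t - w) ^ 2 / t) :=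
              mul_le_mul_of_nonneg_left htail hhyp
          _ ≤ hypergeomPMF N m s t * E₂ := mul_le_mul_of_nonneg_left hmono hhyp
  calc (∑ t ∈ Finset.range (s + 1), ∑ y ∈ Finset.range (t + 1),
        if y < w then hypergeomPMF N m s t * binomPMF t (1 / k) y else 0)
      ≤ ∑ t ∈ Finset.range (s + 1),
          ((if (t:ℝ) < μ * s then hypergeomPMF N m s t else 0)
            + hypergeomPMF N m s t * E₂) := Finset.sum_le_sum hpt
    _ = (∑ t ∈ Finset.range (s + 1), (if (t:ℝ) < μ * s then hypergeomPMF N m s t else 0))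
        + (∑ t ∈ Finset.range (s + 1), hypergeomPMF N m s t) * E₂ := by
        rw [Finset.sum_add_distrib, Finset.sum_mul]
    _ ≤ Real.exp (-2 * χ ^ 2 * s) + 1 * E₂ := by
        apply add_le_add
        · exact hyper_tail hm hs hN hχ0 hχ1
        · apply mul_le_mul_of_nonneg_right _ hE₂pos.le
          rw [hyper_sum hm hs]
    _ = Real.exp (-2 * χ ^ 2 * s) + E₂ := by rw [one_mul]
end
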